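/- Let F be a free filter on ℕ whose dual ideal is countably generated, i.e., there is a partition (A_k) of ℕ into nonempty sets such that the dual ideal consists exactly of all finite unions of subsets of the sets A_k. Then for every F-stationary set J (a set not in the dual ideal) there exists an F-stationary subset J' ⊆ J such that every infinite subset of J' is F-stationary. -/
import Mathlib


/-- A filter on ℕ, as a family of subsets: nonempty (contains `univ`), not containing `∅`,
closed under finite intersections and supersets. -/
def IsSetFilter (F : Set (Set ℕ)) : Prop :=
  Set.univ ∈ F ∧ ∅ ∉ F ∧ (∀ A ∈ F, ∀ B ∈ F, A ∩ B ∈ F) ∧ ∀ A ∈ F, ∀ B : Set ℕ, A ⊆ B → B ∈ F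

/-- A filter is free if its dual ideal contains all finite sets, i.e. the complement of
every finite set belongs to the filter. -/
def IsFreeSetFilter (F : Set (Set ℕ)) : Prop :=
  IsSetFilter F ∧ ∀ S : Set ℕ, S.Finite → Sᶜ ∈ F

/-- `H` is `F`-stationary iff it does not belong to the dual ideal of `F`,
i.e. `Hᶜ ∉ F`. -/
def FStationary (F : Set (Set ℕ)) (H : Set ℕ) : Prop := Hᶜ ∉ F

/-- The dual ideal of `F` is countably generated by the partition `A` of ℕ into
pairwise disjoint nonempty sets: it consists exactly of the finite unions of subsets
of the sets `A k`. -/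
def CountablyGeneratedBy (F : Set (Set ℕ)) (A : ℕ → Set ℕ) : Prop :=
  (∀ k, (A k).Nonempty) ∧ Pairwise (Function.onFun Disjoint A) ∧ (⋃ k, A k) = Set.univ ∧
    ∀ S : Set ℕ, Sᶜ ∈ F ↔ ∃ T : Finset ℕ, ∃ B : ℕ → Set ℕ,
      (∀ k ∈ T, B k ⊆ A k) ∧ S = ⋃ k ∈ T, B k

/-- `F` is super-diagonal: every stationary set has a stationary subset all of whose
infinite subsets are stationary. -/
def SuperDiagonal (F : Set (Set ℕ)) : Prop :=
  ∀ I : Set ℕ, FStationary F I →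
    ∃ J ⊆ I, FStationary F J ∧ ∀ K ⊆ J, K.Infinite → FStationary F K

/-- `F` is diagonal: for every sequence `(A n)` of members of `F` and every stationary
set `I` there exists a stationary `J ⊆ I` with `J \ A n` finite for all `n`. -/
def DiagonalFilter (F : Set (Set ℕ)) : Prop :=
  ∀ A : ℕ → Set ℕ, (∀ n, A n ∈ F) → ∀ I : Set ℕ, FStationary F I →
    ∃ J ⊆ I, FStationary F J ∧ ∀ n, (J \ A n).Finite

/-- `F` is block-respecting: for every stationary set `H` and every partition `(D k)`
of `H` into finite sets, there is a stationary `J ⊆ H` with `|J ∩ D k| ≤ 1` for all `k`. -/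
def BlockRespecting (F : Set (Set ℕ)) : Prop :=
  ∀ H : Set ℕ, FStationary F H → ∀ D : ℕ → Set ℕ, (∀ k, (D k).Finite) →
    Pairwise (Function.onFun Disjoint D) → (⋃ k, D k) = H →
    ∃ J ⊆ H, FStationary F J ∧ ∀ k, (J ∩ D k).Subsingleton

/-- if the free filter `F` has countably generated dual ideal, then every
stationary set `J` has a stationary subset `J'` all of whose infinite subsets are stationary. -/
theorem stmt0 (F : Set (Set ℕ)) (A : ℕ → Set ℕ)
    (hF : IsFreeSetFilter F) (hgen : CountablyGeneratedBy F A)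
    (J : Set ℕ) (hJ : FStationary F J) :
    ∃ J' ⊆ J, FStationary F J' ∧ ∀ K ⊆ J', K.Infinite → FStationary F K := by
  classical
  obtain ⟨hne, hdisj, hcover, hiff⟩ := hgen
  -- membership in the dual ideal is equivalent to meeting only finitely many blocks
  have key : ∀ S : Set ℕ, Sᶜ ∈ F ↔ {k | (S ∩ A k).Nonempty}.Finite := by
    intro S
    rw [hiff]
    constructor
    · rintro ⟨T, B, hB, rfl⟩
      apply T.finite_toSet.subset
      rintro j ⟨x, hxS, hxA⟩
      simp only [Set.mem_iUnion] at hxS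
      obtain ⟨k, hk, hxB⟩ := hxS
      have hjk : j = k := by
        by_contra h
        exact Set.disjoint_left.mp (hdisj h) hxA (hB k hk hxB)
      subst hjk; exact hk
    · intro hfin
      refine ⟨hfin.toFinset, fun k => S ∩ A k, fun k _ => Set.inter_subset_right, ?_⟩
      ext x
      simp only [Set.mem_iUnion]
      constructor
      · intro hx
        have hxu : x ∈ ⋃ k, A k := hcover ▸ Set.mem_univ x
        obtain ⟨k, hk⟩ := Set.mem_iUnion.1 hxu
        exact ⟨k, hfin.mem_toFinset.2 ⟨x, hx, hk⟩, hx, hk⟩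
      · rintro ⟨k, _, hx, _⟩; exact hx
  -- uniqueness of the block containing a point
  have huniq : ∀ (y j k : ℕ), y ∈ A j → y ∈ A k → j = k := by
    intro y j k hj hk
    by_contra h
    exact Set.disjoint_left.mp (hdisj h) hj hk
  -- J meets infinitely many blocks
  have hJinf : {k | (J ∩ A k).Nonempty}.Infinite := fun hfin => hJ ((key J).2 hfin)
  -- choose one point of J in each block it meets
  have hsel : ∀ k : {k // (J ∩ A k).Nonempty}, ∃ y, y ∈ J ∩ A k.1 := fun k => k.2
  choose x hx using hsel
  refine ⟨Set.range x, ?_, ?_, ?_⟩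
  · rintro y ⟨k, rfl⟩; exact (hx k).1
  · intro hc
    apply hJinf
    apply ((key _).1 hc).subset
    rintro k hk
    exact ⟨x ⟨k, hk⟩, ⟨⟨k, hk⟩, rfl⟩, (hx ⟨k, hk⟩).2⟩
  · intro K hK hKinf hc
    -- the block-index function is injective on K
    have hmem : ∀ y ∈ K, ∃ k, y ∈ A k ∧ (K ∩ A k).Nonempty := by
      intro y hy
      obtain ⟨⟨k, hk⟩, rfl⟩ := hK hy
      exact ⟨k, (hx ⟨k, hk⟩).2, ⟨x ⟨k, hk⟩, hy, (hx ⟨k, hk⟩).2⟩⟩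
    choose c hc1 hc2 using hmem
    have hinj : Function.Injective (fun y : K => c y.1 y.2) := by
      rintro ⟨y, hy⟩ ⟨z, hz⟩ hcz
      obtain ⟨⟨ky, hky⟩, hy'⟩ := hK hy
      obtain ⟨⟨kz, hkz⟩, hz'⟩ := hK hz
      have e1 : ky = c y hy := huniq y _ _ (hy' ▸ (hx ⟨ky, hky⟩).2) (hc1 y hy)
      have e2 : kz = c z hz := huniq z _ _ (hz' ▸ (hx ⟨kz, hkz⟩).2) (hc1 z hz)
      have : ky = kz := by rw [e1, e2]; exact hcz
      subst this
      simp only [Subtype.mk.injEq]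
      rw [← hy', ← hz']
    have himg : Set.range (fun y : K => c y.1 y.2) ⊆ {k | (K ∩ A k).Nonempty} := by
      rintro k ⟨⟨y, hy⟩, rfl⟩; exact hc2 y hy
    have : {k | (K ∩ A k).Nonempty}.Infinite := by
      apply Set.Infinite.mono himg
      have : Infinite K := hKinf.to_subtype
      exact Set.infinite_range_of_injective hinj
    exact this ((key K).1 hc)
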